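/- Let S be a scoring function, i.e. a function assigning to each credential x ∈ [0,1] and each stake α > 0 a real score S(x, α), measurable in x for each fixed α. Suppose S is balanced: for every n ≥ 1 and all stakes α_1, …, α_n > 0, if X_1, …, X_n are i.i.d. uniform on [0,1], then almost surely the index minimizing S(X_i, α_i) is unique and, for every j, P[argmin_{i ∈ [n]} S(X_i, α_i) = j] = α_j/(α_1 + ⋯ + α_n). Then for every n ≥ 1 and all α_1, …, α_n > 0, the random variables S(X, α_1 + ⋯ + α_n) and min_{1 ≤ i ≤ n} S(X_i, α_i) are identically distributed, where X, X_1, …, X_n are i.i.d. uniform on [0,1]. -/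

import Mathlib

open MeasureTheory Set
open scoped ENNReal NNReal

/-- The uniform distribution on `[0,1]`. -/
noncomputable def unif : Measure ℝ := volume.restrict (Set.Icc (0 : ℝ) 1)

instance unif_prob : IsProbabilityMeasure unif :=
  ⟨by simp [unif, Real.volume_Icc]⟩

lemma pi_box {m : ℕ} (A : Fin m → Set ℝ) :
    (Measure.pi fun _ : Fin m => unif) {x | ∀ i, x i ∈ A i} = ∏ i, unif (A i) := by
  rw [show {x : Fin m → ℝ | ∀ i, x i ∈ A i} = Set.pi Set.univ A by
    ext x; simp [Set.mem_pi], Measure.pi_pi]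

lemma amgm_ennreal (a b : ℝ≥0∞) : 2 * (a * b) ≤ a * a + b * b := by
  rcases eq_or_ne a ⊤ with rfl | ha
  · rcases eq_or_ne b 0 with rfl | hb
    · simp
    · simp [ENNReal.top_mul hb]
  rcases eq_or_ne b ⊤ with rfl | hb
  · rcases eq_or_ne a 0 with rfl | ha0
    · simp
    · simp [ENNReal.mul_top ha0]
  lift a to ℝ≥0 using ha
  lift b to ℝ≥0 using hb
  rw [← ENNReal.coe_mul, ← ENNReal.coe_mul, ← ENNReal.coe_mul, ← ENNReal.coe_add,
    show ((2:ℝ≥0∞)) = ((2:ℝ≥0):ℝ≥0∞) by norm_num, ← ENNReal.coe_mul, ENNReal.coe_le_coe,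
    ← NNReal.coe_le_coe]
  push_cast
  nlinarith [sq_nonneg ((a:ℝ) - b)]

lemma amgm_eq_ennreal {a b : ℝ≥0∞} (ha : a ≠ ⊤) (hb : b ≠ ⊤)
    (h : a * a + b * b = 2 * (a * b)) : a = b := by
  lift a to ℝ≥0 using ha
  lift b to ℝ≥0 using hb
  rw [← ENNReal.coe_mul, ← ENNReal.coe_mul, ← ENNReal.coe_add,
    show ((2:ℝ≥0∞)) = ((2:ℝ≥0):ℝ≥0∞) by norm_num, ← ENNReal.coe_mul, ← ENNReal.coe_mul,
    ENNReal.coe_inj] at h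
  rw [ENNReal.coe_inj]
  have h' : (a:ℝ) * a + b * b = 2 * (a * b) := by
    exact_mod_cast congrArg (fun x : ℝ≥0 => (x:ℝ)) h
  have h2 : ((a:ℝ) - b) ^ 2 = 0 := by nlinarith
  have h3 := pow_eq_zero_iff (n := 2) (by norm_num) |>.mp h2
  exact NNReal.coe_injective (by linarith)

/-- Any balanced scoring function `S` (each account wins with probability proportional to
its stake, with an a.s. unique minimizer, when credentials are i.i.d. uniform on `[0,1]`)
satisfies: `S(X, α_1 + ⋯ + α_n)` and `min_i S(X_i, α_i)` are identically distributed for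
`X, X_1, …, X_n` i.i.d. uniform on `[0,1]` — merging stakes does not change the
distribution of the minimum score. -/
theorem stmt_16 (S : ℝ → ℝ → ℝ) (hSm : ∀ a : ℝ, Measurable fun x => S x a)
    (hbal : ∀ n : ℕ, 0 < n → ∀ a : Fin n → ℝ, (∀ i, 0 < a i) →
      (∀ᵐ x ∂(Measure.pi fun _ : Fin n => unif),
        ∃! j : Fin n, ∀ i, S (x j) (a j) ≤ S (x i) (a i)) ∧
      ∀ j : Fin n,
        (Measure.pi fun _ : Fin n => unif) {x | ∀ i, S (x j) (a j) ≤ S (x i) (a i)} =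
          ENNReal.ofReal (a j / ∑ i, a i)) :
    ∀ n : ℕ, 0 < n → ∀ a : Fin n → ℝ, (∀ i, 0 < a i) →
      Measure.map (fun x : ℝ => S x (∑ i, a i)) unif =
        Measure.map (fun x : Fin n → ℝ => ⨅ i, S (x i) (a i))
          (Measure.pi fun _ : Fin n => unif) := by
  intro n hn a ha
  have hne : Nonempty (Fin n) := ⟨⟨0, hn⟩⟩
  set c := ∑ i, a i with hc_def
  have hc : 0 < c := Finset.sum_pos (fun i _ => ha i) Finset.univ_nonempty
  set T : (Fin n → ℝ) → ℝ := fun x => ⨅ i, S (x i) (a i) with hT_def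
  have hTm : Measurable T :=
    Measurable.iInf (fun i => (hSm (a i)).comp (measurable_pi_apply i))
  have hT_le : ∀ (x : Fin n → ℝ) i, T x ≤ S (x i) (a i) := fun x i =>
    ciInf_le (Finite.bddBelow_range _) i
  have hT_ex : ∀ x : Fin n → ℝ, ∃ j, T x = S (x j) (a j) := fun x => by
    obtain ⟨j, hj⟩ := exists_eq_ciInf_of_finite (f := fun i => S (x i) (a i))
    exact ⟨j, hj.symm⟩
  set μ₁ : Measure ℝ := Measure.map (fun x : ℝ => S x c) unif with hμ₁_def
  set μ₂ : Measure ℝ := Measure.map T (Measure.pi fun _ : Fin n => unif) with hμ₂_def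
  haveI : IsProbabilityMeasure μ₁ := Measure.isProbabilityMeasure_map (hSm c).aemeasurable
  haveI : IsProbabilityMeasure μ₂ := Measure.isProbabilityMeasure_map hTm.aemeasurable
  set G : ℝ → ℝ≥0∞ := fun t => μ₁ (Ici t) with hG_def
  set H : ℝ → ℝ≥0∞ := fun t => μ₂ (Ici t) with hH_def
  set q : ℝ → ℝ → ℝ≥0∞ := fun ρ t => unif {y | t ≤ S y ρ} with hq_def
  have hq_anti : ∀ ρ, Antitone (q ρ) := fun ρ s t hst =>
    measure_mono (fun y hy => le_trans hst hy)
  have hq_meas : ∀ ρ, Measurable (q ρ) := fun ρ => (hq_anti ρ).measurable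
  have hGanti : Antitone G := fun s t hst => measure_mono (Ici_subset_Ici.2 hst)
  have hHanti : Antitone H := fun s t hst => measure_mono (Ici_subset_Ici.2 hst)
  have hGm : Measurable G := hGanti.measurable
  have hHm : Measurable H := hHanti.measurable
  have hGne : ∀ s, G s ≠ ⊤ := fun s => (lt_of_le_of_lt prob_le_one ENNReal.one_lt_top).ne
  have hHne : ∀ s, H s ≠ ⊤ := fun s => (lt_of_le_of_lt prob_le_one ENNReal.one_lt_top).ne
  have hqc : ∀ t, q c t = G t := by
    intro t
    show unif {y | t ≤ S y c} = μ₁ (Ici t)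
    rw [hμ₁_def, Measure.map_apply (hSm c) measurableSet_Ici]
    rfl
  have hH_prod : ∀ t, H t = ∏ i, q (a i) t := by
    intro t
    have hpre : T ⁻¹' Ici t = {x : Fin n → ℝ | ∀ i, x i ∈ {y | t ≤ S y (a i)}} := by
      ext x
      simp only [mem_preimage, mem_Ici, mem_setOf_eq]
      constructor
      · intro h i; exact le_trans h (hT_le x i)
      · intro h; exact le_ciInf h
    show μ₂ (Ici t) = _
    rw [hμ₂_def, Measure.map_apply hTm measurableSet_Ici, hpre, pi_box]
  have hprod_meas : ∀ (m : ℕ) (b : Fin m → ℝ), Measurable fun s => ∏ i, q (b i) s :=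
    fun m b => Finset.measurable_prod Finset.univ (fun i _ => hq_meas (b i))
  -- measure-preserving splitting map
  have hφmp : ∀ r : ℕ, MeasurePreserving
      (fun x : Fin (n+r) → ℝ =>
        ((fun j => x (Fin.castAdd r j), fun i => x (Fin.natAdd n i)) :
          (Fin n → ℝ) × (Fin r → ℝ)))
      (Measure.pi fun _ : Fin (n+r) => unif)
      ((Measure.pi fun _ : Fin n => unif).prod (Measure.pi fun _ : Fin r => unif)) := by
    intro r
    have h1 := measurePreserving_piCongrLeft (fun _ : Fin (n+r) => unif)
      (finSumFinEquiv : Fin n ⊕ Fin r ≃ Fin (n+r))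
    have h2 := measurePreserving_sumPiEquivProdPi (X := fun _ : Fin n ⊕ Fin r => ℝ)
      (fun _ => unif)
    have h3 := h2.comp (h1.symm (MeasurableEquiv.piCongrLeft (fun _ : Fin (n+r) => ℝ)
      finSumFinEquiv))
    have hfun : (fun x : Fin (n+r) → ℝ =>
        ((fun j => x (Fin.castAdd r j), fun i => x (Fin.natAdd n i)) :
          (Fin n → ℝ) × (Fin r → ℝ))) =
        ⇑(MeasurableEquiv.sumPiEquivProdPi (fun _ : Fin n ⊕ Fin r => ℝ)) ∘
        ⇑(MeasurableEquiv.piCongrLeft (fun _ : Fin (n+r) => ℝ) finSumFinEquiv).symm := by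
      funext x
      rfl
    rw [hfun]
    exact h3
  -- Fubini, merged copy against the rest (μ₁ version)
  have F1 : ∀ (M : ℕ) (b : Fin M → ℝ), (∀ i, 0 < b i) →
      ∫⁻ s, ∏ i, q (b i) s ∂μ₁ = ENNReal.ofReal (c / (c + ∑ i, b i)) := by
    intro M b hb
    have hsp : ∀ i : Fin (M+1), 0 < (Fin.snoc b c : Fin (M+1) → ℝ) i := by
      intro i
      refine Fin.lastCases ?_ (fun j => ?_) i
      · rw [Fin.snoc_last]; exact hc
      · rw [Fin.snoc_castSucc]; exact hb j
    obtain ⟨-, hv⟩ := hbal (M+1) (Nat.succ_pos M) (Fin.snoc b c) hsp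
    have hval := hv (Fin.last M)
    simp only [Fin.snoc_last] at hval
    have hsum : ∑ i, (Fin.snoc b c : Fin (M+1) → ℝ) i = ∑ i, b i + c := by
      rw [Fin.sum_univ_castSucc]
      simp only [Fin.snoc_castSucc, Fin.snoc_last]
    rw [hsum] at hval
    set e := MeasurableEquiv.piFinSuccAbove (fun _ : Fin (M+1) => ℝ) (Fin.last M) with he
    have hmp := measurePreserving_piFinSuccAbove (fun _ : Fin (M+1) => unif) (Fin.last M)
    set V : Set (ℝ × (Fin M → ℝ)) := {p | ∀ i, S p.1 c ≤ S (p.2 i) (b i)} with hV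
    have hVm : MeasurableSet V := by
      rw [hV, setOf_forall]
      exact MeasurableSet.iInter fun i => measurableSet_le ((hSm c).comp measurable_fst)
        ((hSm (b i)).comp ((measurable_pi_apply i).comp measurable_snd))
    have hpre : ⇑e ⁻¹' V = {x : Fin (M+1) → ℝ |
        ∀ i, S (x (Fin.last M)) c ≤ S (x i) ((Fin.snoc b c : Fin (M+1) → ℝ) i)} := by
      have he_app : ∀ x : Fin (M+1) → ℝ,
          ⇑e x = (x (Fin.last M), fun j => x (Fin.castSucc j)) := by
        intro x
        show (x (Fin.last M), Fin.removeNth (Fin.last M) x) = _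
        rw [Fin.removeNth_last]
        rfl
      ext x
      simp only [mem_preimage, he_app x, mem_setOf_eq, hV]
      constructor
      · intro h i
        refine Fin.lastCases ?_ (fun j => ?_) i
        · rw [Fin.snoc_last]
        · have h' := h j
          rwa [Fin.snoc_castSucc]
      · intro h j
        have h' := h (Fin.castSucc j)
        rwa [Fin.snoc_castSucc] at h'
    have hslice : ∀ y : ℝ, (Measure.pi fun _ : Fin M => unif) (Prod.mk y ⁻¹' V)
        = ∏ i, q (b i) (S y c) := by
      intro y
      rw [show Prod.mk y ⁻¹' V = {z : Fin M → ℝ | ∀ i, z i ∈ {w | S y c ≤ S w (b i)}}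
        from rfl, pi_box]
    calc ∫⁻ s, ∏ i, q (b i) s ∂μ₁
        = ∫⁻ y, ∏ i, q (b i) (S y c) ∂unif := by
          rw [hμ₁_def, lintegral_map (hprod_meas M b) (hSm c)]
      _ = (unif.prod (Measure.pi fun _ : Fin M => unif)) V := by
          rw [Measure.prod_apply hVm]
          exact lintegral_congr fun y => (hslice y).symm
      _ = (Measure.pi fun _ : Fin (M+1) => unif) (⇑e ⁻¹' V) :=
          (hmp.measure_preimage hVm.nullMeasurableSet).symm
      _ = ENNReal.ofReal (c / (c + ∑ i, b i)) := by
          rw [hpre, hval]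
          congr 1
          rw [add_comm]
  -- Fubini, split block against the rest (μ₂ version)
  have F2 : ∀ (r : ℕ) (b : Fin r → ℝ), (∀ i, 0 < b i) →
      ∫⁻ s, ∏ i, q (b i) s ∂μ₂ = ENNReal.ofReal (c / (c + ∑ i, b i)) := by
    intro r b hb
    have hap : ∀ i : Fin (n+r), 0 < Fin.append a b i := by
      intro i
      refine Fin.addCases (fun j => ?_) (fun j => ?_) i
      · rw [Fin.append_left]; exact ha j
      · rw [Fin.append_right]; exact hb j
    obtain ⟨hu, hv⟩ := hbal (n+r) (by omega) (Fin.append a b) hap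
    have hnull := ae_iff.mp hu
    set win : Fin (n+r) → Set (Fin (n+r) → ℝ) := fun j =>
      {x | ∀ i, S (x j) (Fin.append a b j) ≤ S (x i) (Fin.append a b i)} with hwin
    have hwinm : ∀ j, MeasurableSet (win j) := by
      intro j
      rw [hwin]
      simp only
      rw [setOf_forall]
      exact MeasurableSet.iInter fun i => measurableSet_le
        ((hSm _).comp (measurable_pi_apply j)) ((hSm _).comp (measurable_pi_apply i))
    have hdisj : Pairwise (Function.onFun (AEDisjoint (Measure.pi fun _ : Fin (n+r) => unif))
        fun j : Fin n => win (Fin.castAdd r j)) := by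
      intro j j' hjj'
      refine measure_mono_null ?_ hnull
      rintro x ⟨hx1, hx2⟩ h
      obtain ⟨j₀, -, huniq⟩ := h
      have e1 := huniq _ hx1
      have e2 := huniq _ hx2
      apply hjj'
      apply Fin.ext
      have := congrArg Fin.val (e1.trans e2.symm)
      simpa using this
    have hsum : ∑ i, Fin.append a b i = c + ∑ i, b i := by
      rw [Fin.sum_univ_add]
      simp only [Fin.append_left, Fin.append_right, ← hc_def]
    have hvals : ∀ j : Fin n, (Measure.pi fun _ : Fin (n+r) => unif)
        (win (Fin.castAdd r j)) = ENNReal.ofReal (a j / (c + ∑ i, b i)) := by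
      intro j
      have hv' := hv (Fin.castAdd r j)
      simp only [Fin.append_left] at hv'
      rw [hsum] at hv'
      have hwj : win (Fin.castAdd r j) = {x : Fin (n+r) → ℝ |
          ∀ i, S (x (Fin.castAdd r j)) (a j) ≤ S (x i) (Fin.append a b i)} := by
        rw [hwin]
        simp only [Fin.append_left]
      rw [hwj]
      exact hv'
    set V : Set ((Fin n → ℝ) × (Fin r → ℝ)) := {p | ∀ i, T p.1 ≤ S (p.2 i) (b i)} with hV
    have hVm : MeasurableSet V := by
      rw [hV, setOf_forall]
      exact MeasurableSet.iInter fun i => measurableSet_le (hTm.comp measurable_fst)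
        ((hSm (b i)).comp ((measurable_pi_apply i).comp measurable_snd))
    have hUeq : (⋃ j : Fin n, win (Fin.castAdd r j)) =
        (fun x : Fin (n+r) → ℝ =>
          ((fun j => x (Fin.castAdd r j), fun i => x (Fin.natAdd n i)) :
            (Fin n → ℝ) × (Fin r → ℝ))) ⁻¹' V := by
      ext x
      simp only [mem_iUnion, mem_preimage, mem_setOf_eq, hwin, hV]
      constructor
      · rintro ⟨j, hj⟩ i
        have h1 : T (fun j' => x (Fin.castAdd r j')) ≤ S (x (Fin.castAdd r j)) (a j) :=
          hT_le (fun j' => x (Fin.castAdd r j')) j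
        have h2 := hj (Fin.natAdd n i)
        rw [Fin.append_left, Fin.append_right] at h2
        exact le_trans h1 h2
      · intro hx
        obtain ⟨j, hj⟩ := hT_ex (fun j' => x (Fin.castAdd r j'))
        refine ⟨j, fun i => ?_⟩
        rw [Fin.append_left]
        refine Fin.addCases (fun i' => ?_) (fun i' => ?_) i
        · rw [Fin.append_left]
          exact le_trans (le_of_eq hj.symm) (hT_le (fun j' => x (Fin.castAdd r j')) i')
        · rw [Fin.append_right]
          exact le_trans (le_of_eq hj.symm) (hx i')
    have hUm := measure_iUnion₀ hdisj (fun j => (hwinm _).nullMeasurableSet)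
    have hslice : ∀ y : Fin n → ℝ, (Measure.pi fun _ : Fin r => unif) (Prod.mk y ⁻¹' V)
        = ∏ i, q (b i) (T y) := by
      intro y
      rw [show Prod.mk y ⁻¹' V = {z : Fin r → ℝ | ∀ i, z i ∈ {w | T y ≤ S w (b i)}}
        from rfl, pi_box]
    calc ∫⁻ s, ∏ i, q (b i) s ∂μ₂
        = ∫⁻ y, ∏ i, q (b i) (T y) ∂(Measure.pi fun _ : Fin n => unif) := by
          rw [hμ₂_def, lintegral_map (hprod_meas r b) hTm]
      _ = ((Measure.pi fun _ : Fin n => unif).prod (Measure.pi fun _ : Fin r => unif)) V := by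
          rw [Measure.prod_apply hVm]
          exact lintegral_congr fun y => (hslice y).symm
      _ = (Measure.pi fun _ : Fin (n+r) => unif) ((fun x : Fin (n+r) → ℝ =>
            ((fun j => x (Fin.castAdd r j), fun i => x (Fin.natAdd n i)) :
              (Fin n → ℝ) × (Fin r → ℝ))) ⁻¹' V) :=
          ((hφmp r).measure_preimage hVm.nullMeasurableSet).symm
      _ = ∑' j : Fin n, (Measure.pi fun _ : Fin (n+r) => unif) (win (Fin.castAdd r j)) := by
          rw [← hUeq]
          exact hUm
      _ = ∑ j : Fin n, ENNReal.ofReal (a j / (c + ∑ i, b i)) := by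
          rw [tsum_fintype]
          exact Finset.sum_congr rfl fun j _ => hvals j
      _ = ENNReal.ofReal (c / (c + ∑ i, b i)) := by
          rw [← ENNReal.ofReal_sum_of_nonneg (fun j _ =>
            div_nonneg (ha j).le (add_nonneg hc.le (Finset.sum_nonneg fun i _ => (hb i).le)))]
          rw [← Finset.sum_div, ← hc_def]
  -- atomlessness of μ₁
  have hA1 : ∀ s, μ₁ {s} = 0 := by
    intro s
    obtain ⟨hu, -⟩ := hbal 2 (by norm_num) (fun _ => c) (fun _ => hc)
    have hnull := ae_iff.mp hu
    set A : Set ℝ := (fun y => S y c) ⁻¹' {s} with hA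
    have hsub : {x : Fin 2 → ℝ | ∀ i, x i ∈ A} ⊆
        {x : Fin 2 → ℝ | ¬ ∃! j : Fin 2, ∀ i, S (x j) c ≤ S (x i) c} := by
      intro x hx h
      obtain ⟨j, -, huniq⟩ := h
      have hxv : ∀ i : Fin 2, S (x i) c = s := fun i => hx i
      have h0 := huniq 0 (fun i => by rw [hxv 0, hxv i])
      have h1 := huniq 1 (fun i => by rw [hxv 1, hxv i])
      exact absurd (h0.trans h1.symm) (by decide)
    have hz : unif A * unif A = 0 := by
      have h2 := measure_mono_null hsub hnull
      have h3 := pi_box (fun _ : Fin 2 => A)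
      rw [Fin.prod_univ_two] at h3
      rw [← h3]
      exact h2
    rw [hμ₁_def, Measure.map_apply (hSm c) (measurableSet_singleton s)]
    exact mul_self_eq_zero.mp hz
  -- atomlessness of μ₂
  have hA2 : ∀ s, μ₂ {s} = 0 := by
    intro s
    have hap : ∀ i : Fin (n+n), 0 < Fin.append a a i := by
      intro i
      refine Fin.addCases (fun j => ?_) (fun j => ?_) i
      · rw [Fin.append_left]; exact ha j
      · rw [Fin.append_right]; exact ha j
    obtain ⟨hu, -⟩ := hbal (n+n) (by omega) (Fin.append a a) hap
    have hnull := ae_iff.mp hu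
    set B : Set (Fin n → ℝ) := T ⁻¹' {s} with hB
    have hBm : MeasurableSet B := hTm (measurableSet_singleton s)
    have hsub : (fun x : Fin (n+n) → ℝ =>
        ((fun j => x (Fin.castAdd n j), fun i => x (Fin.natAdd n i)) :
          (Fin n → ℝ) × (Fin n → ℝ))) ⁻¹' (B ×ˢ B) ⊆
        {x : Fin (n+n) → ℝ | ¬ ∃! j : Fin (n+n),
          ∀ i, S (x j) (Fin.append a a j) ≤ S (x i) (Fin.append a a i)} := by
      intro x hx h
      obtain ⟨j₀, -, huniq⟩ := h
      have hx1 : T (fun j => x (Fin.castAdd n j)) = s := hx.1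
      have hx2 : T (fun j => x (Fin.natAdd n j)) = s := hx.2
      obtain ⟨j₁, hj₁⟩ := hT_ex (fun j => x (Fin.castAdd n j))
      obtain ⟨j₂, hj₂⟩ := hT_ex (fun j => x (Fin.natAdd n j))
      have hP1 : ∀ i, S (x (Fin.castAdd n j₁)) (Fin.append a a (Fin.castAdd n j₁))
          ≤ S (x i) (Fin.append a a i) := by
        intro i
        rw [Fin.append_left]
        refine Fin.addCases (fun i' => ?_) (fun i' => ?_) i
        · rw [Fin.append_left]
          exact le_trans (le_of_eq hj₁.symm) (hT_le (fun j => x (Fin.castAdd n j)) i')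
        · rw [Fin.append_right]
          refine le_trans (le_of_eq hj₁.symm) ?_
          rw [hx1, ← hx2]
          exact hT_le (fun j => x (Fin.natAdd n j)) i'
      have hP2 : ∀ i, S (x (Fin.natAdd n j₂)) (Fin.append a a (Fin.natAdd n j₂))
          ≤ S (x i) (Fin.append a a i) := by
        intro i
        rw [Fin.append_right]
        refine Fin.addCases (fun i' => ?_) (fun i' => ?_) i
        · rw [Fin.append_left]
          refine le_trans (le_of_eq hj₂.symm) ?_
          rw [hx2, ← hx1]
          exact hT_le (fun j => x (Fin.castAdd n j)) i'
        · rw [Fin.append_right]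
          exact le_trans (le_of_eq hj₂.symm) (hT_le (fun j => x (Fin.natAdd n j)) i')
      have e1 := huniq _ hP1
      have e2 := huniq _ hP2
      have hval := congrArg Fin.val (e1.trans e2.symm)
      have hlt := j₁.isLt
      simp only [Fin.coe_castAdd, Fin.coe_natAdd] at hval
      omega
    have hz : μ₂ {s} * μ₂ {s} = 0 := by
      have h2 := measure_mono_null hsub hnull
      have h3 : ((Measure.pi fun _ : Fin n => unif).prod (Measure.pi fun _ : Fin n => unif))
          (B ×ˢ B) = 0 := by
        rw [← (hφmp n).measure_preimage (hBm.prod hBm).nullMeasurableSet]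
        exact h2
      rw [Measure.prod_prod] at h3
      have hμB : μ₂ {s} = (Measure.pi fun _ : Fin n => unif) B := by
        rw [hμ₂_def, Measure.map_apply hTm (measurableSet_singleton s)]
      rw [hμB]
      exact h3
    exact mul_self_eq_zero.mp hz
  -- product formulas
  have hp1 : ∀ s, ∏ i : Fin 2, q ((fun _ => c) i) s = G s * G s := by
    intro s; rw [Fin.prod_univ_two, hqc]
  have hp2 : ∀ s, ∏ i : Fin (n+1), q ((Fin.snoc a c : Fin (n+1) → ℝ) i) s = H s * G s := by
    intro s
    rw [Fin.prod_univ_castSucc]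
    simp only [Fin.snoc_castSucc, Fin.snoc_last, hqc, hH_prod]
  have hp3 : ∀ s, ∏ i : Fin (n+n), q (Fin.append a a i) s = H s * H s := by
    intro s
    rw [Fin.prod_univ_add]
    simp only [Fin.append_left, Fin.append_right, hH_prod]
  have hsum1 : ∑ i : Fin 2, (fun _ => c) i = c + c := by
    rw [Fin.sum_univ_two]
  have hsum2 : ∑ i : Fin (n+1), (Fin.snoc a c : Fin (n+1) → ℝ) i = c + c := by
    rw [Fin.sum_univ_castSucc]
    simp only [Fin.snoc_castSucc, Fin.snoc_last, ← hc_def]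
  have hsum3 : ∑ i : Fin (n+n), Fin.append a a i = c + c := by
    rw [Fin.sum_univ_add]
    simp only [Fin.append_left, Fin.append_right, ← hc_def]
  have hpos2 : ∀ i : Fin (n+1), 0 < (Fin.snoc a c : Fin (n+1) → ℝ) i := by
    intro i
    refine Fin.lastCases ?_ (fun j => ?_) i
    · rw [Fin.snoc_last]; exact hc
    · rw [Fin.snoc_castSucc]; exact ha j
  have hpos3 : ∀ i : Fin (n+n), 0 < Fin.append a a i := by
    intro i
    refine Fin.addCases (fun j => ?_) (fun j => ?_) i
    · rw [Fin.append_left]; exact ha j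
    · rw [Fin.append_right]; exact ha j
  have hthird : c / (c + (c + c)) = 1/3 := by
    rw [div_eq_div_iff (by linarith) (by norm_num)]
    ring
  have e1 : ∫⁻ s, G s * G s ∂μ₁ = ENNReal.ofReal (1/3) := by
    have h := F1 2 (fun _ => c) (fun _ => hc)
    rw [hsum1, hthird] at h
    rw [← h]
    exact lintegral_congr (fun s => (hp1 s).symm)
  have e2 : ∫⁻ s, H s * G s ∂μ₁ = ENNReal.ofReal (1/3) := by
    have h := F1 (n+1) (Fin.snoc a c : Fin (n+1) → ℝ) hpos2
    rw [hsum2, hthird] at h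
    rw [← h]
    exact lintegral_congr (fun s => (hp2 s).symm)
  have e3 : ∫⁻ s, H s * H s ∂μ₁ = ENNReal.ofReal (1/3) := by
    have h := F1 (n+n) (Fin.append a a) hpos3
    rw [hsum3, hthird] at h
    rw [← h]
    exact lintegral_congr (fun s => (hp3 s).symm)
  have e4 : ∫⁻ s, G s * G s ∂μ₂ = ENNReal.ofReal (1/3) := by
    have h := F2 2 (fun _ => c) (fun _ => hc)
    rw [hsum1, hthird] at h
    rw [← h]
    exact lintegral_congr (fun s => (hp1 s).symm)
  have e5 : ∫⁻ s, H s * G s ∂μ₂ = ENNReal.ofReal (1/3) := by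
    have h := F2 (n+1) (Fin.snoc a c : Fin (n+1) → ℝ) hpos2
    rw [hsum2, hthird] at h
    rw [← h]
    exact lintegral_congr (fun s => (hp2 s).symm)
  have e6 : ∫⁻ s, H s * H s ∂μ₂ = ENNReal.ofReal (1/3) := by
    have h := F2 (n+n) (Fin.append a a) hpos3
    rw [hsum3, hthird] at h
    rw [← h]
    exact lintegral_congr (fun s => (hp3 s).symm)
  -- a.e. equality of survival functions
  have key : ∀ (μ : Measure ℝ), IsProbabilityMeasure μ →
      (∫⁻ s, G s * G s ∂μ = ENNReal.ofReal (1/3)) →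
      (∫⁻ s, H s * G s ∂μ = ENNReal.ofReal (1/3)) →
      (∫⁻ s, H s * H s ∂μ = ENNReal.ofReal (1/3)) →
      ∀ᵐ s ∂μ, G s = H s := by
    intro μ hμprob hGG hHG hHH
    haveI := hμprob
    have hfm : Measurable fun s => 2 * (G s * H s) := measurable_const.mul (hGm.mul hHm)
    have hgm : Measurable fun s => G s * G s + H s * H s := (hGm.mul hGm).add (hHm.mul hHm)
    have hint_f : ∫⁻ s, 2 * (G s * H s) ∂μ
        = ENNReal.ofReal (1/3) + ENNReal.ofReal (1/3) := by
      rw [lintegral_const_mul 2 (f := fun s => G s * H s) (hGm.mul hHm)]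
      have hGH : ∫⁻ s, G s * H s ∂μ = ENNReal.ofReal (1/3) := by
        rw [← hHG]
        exact lintegral_congr fun s => mul_comm _ _
      rw [hGH, two_mul]
    have hint_g : ∫⁻ s, (G s * G s + H s * H s) ∂μ
        = ENNReal.ofReal (1/3) + ENNReal.ofReal (1/3) := by
      rw [lintegral_add_left (f := fun s => G s * G s) (hGm.mul hGm), hGG, hHH]
    have hf_ne : ∫⁻ s, 2 * (G s * H s) ∂μ ≠ ⊤ := by
      rw [hint_f]
      exact ENNReal.add_ne_top.mpr ⟨ENNReal.ofReal_ne_top, ENNReal.ofReal_ne_top⟩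
    have hle : ∀ s, 2 * (G s * H s) ≤ G s * G s + H s * H s := fun s => amgm_ennreal _ _
    have hsub : ∫⁻ s, (G s * G s + H s * H s) - 2 * (G s * H s) ∂μ = 0 := by
      rw [lintegral_sub hfm hf_ne (ae_of_all _ hle), hint_f, hint_g, tsub_self]
    have hz := (lintegral_eq_zero_iff (hgm.sub hfm)).mp hsub
    filter_upwards [hz] with s hs
    have hs' : G s * G s + H s * H s - 2 * (G s * H s) = 0 := hs
    have hle' : G s * G s + H s * H s ≤ 2 * (G s * H s) := tsub_eq_zero_iff_le.mp hs'
    exact amgm_eq_ennreal (hGne s) (hHne s) (le_antisymm hle' (hle s))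
  have hae1 : ∀ᵐ s ∂μ₁, G s = H s := key μ₁ inferInstance e1 e2 e3
  have hae2 : ∀ᵐ s ∂μ₂, G s = H s := key μ₂ inferInstance e4 e5 e6
  -- from atoms to open/closed ray agreement
  have hIoi1 : ∀ t, μ₁ (Ioi t) = G t := by
    intro t
    refine le_antisymm (measure_mono Ioi_subset_Ici_self) ?_
    calc μ₁ (Ici t) = μ₁ (insert t (Ioi t)) := by rw [Ioi_insert]
      _ ≤ μ₁ {t} + μ₁ (Ioi t) := by rw [insert_eq]; exact measure_union_le _ _
      _ = μ₁ (Ioi t) := by rw [hA1, zero_add]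
  have hIoi2 : ∀ t, μ₂ (Ioi t) = H t := by
    intro t
    refine le_antisymm (measure_mono Ioi_subset_Ici_self) ?_
    calc μ₂ (Ici t) = μ₂ (insert t (Ioi t)) := by rw [Ioi_insert]
      _ ≤ μ₂ {t} + μ₂ (Ioi t) := by rw [insert_eq]; exact measure_union_le _ _
      _ = μ₂ (Ioi t) := by rw [hA2, zero_add]
  -- pointwise equality of survival functions
  have hpt : ∀ t, μ₁ (Ici t) = μ₂ (Ici t) := by
    intro t
    show G t = H t
    rw [← hIoi1 t, ← hIoi2 t]
    have hn1 : μ₁ {s | G s ≠ H s} = 0 := hae1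
    have hn2 : μ₂ {s | G s ≠ H s} = 0 := hae2
    by_cases hz : μ₁ (Ioi t) = 0 ∧ μ₂ (Ioi t) = 0
    · rw [hz.1, hz.2]
    · have hEne : ({s | G s = H s} ∩ Ioi t).Nonempty := by
        by_contra hemp
        rw [not_nonempty_iff_eq_empty] at hemp
        have hsub' : Ioi t ⊆ {s | G s ≠ H s} := by
          intro v hv
          intro heq
          have hmem : v ∈ ({s | G s = H s} ∩ Ioi t) := ⟨heq, hv⟩
          rw [hemp] at hmem
          exact hmem
        exact hz ⟨measure_mono_null hsub' hn1, measure_mono_null hsub' hn2⟩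
      set E := {s | G s = H s} ∩ Ioi t with hE
      have hbdd : BddBelow E := ⟨t, fun v hv => le_of_lt hv.2⟩
      set u := sInf E with hu
      have hut : t ≤ u := le_csInf hEne (fun v hv => le_of_lt hv.2)
      have hIoo : Ioo t u ⊆ {s | G s ≠ H s} := by
        intro v hv heq
        have : v ∈ E := ⟨heq, hv.1⟩
        exact absurd (csInf_le hbdd this) (not_le.mpr hv.2)
      have hIoc1 : μ₁ (Ioc t u) = 0 := by
        refine measure_mono_null (fun v hv => ?_) (?_ : μ₁ (Ioo t u ∪ {u}) = 0)
        · rcases lt_or_eq_of_le hv.2 with h | h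
          · exact Or.inl ⟨hv.1, h⟩
          · exact Or.inr (by rw [h]; exact rfl)
        · refine measure_union_null (measure_mono_null hIoo hn1) (hA1 u)
      have hIoc2 : μ₂ (Ioc t u) = 0 := by
        refine measure_mono_null (fun v hv => ?_) (?_ : μ₂ (Ioo t u ∪ {u}) = 0)
        · rcases lt_or_eq_of_le hv.2 with h | h
          · exact Or.inl ⟨hv.1, h⟩
          · exact Or.inr (by rw [h]; exact rfl)
        · refine measure_union_null (measure_mono_null hIoo hn2) (hA2 u)
      have hshift1 : μ₁ (Ioi t) = μ₁ (Ioi u) := by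
        rw [← Ioc_union_Ioi_eq_Ioi hut]
        refine le_antisymm ?_ (measure_mono subset_union_right)
        calc μ₁ (Ioc t u ∪ Ioi u) ≤ μ₁ (Ioc t u) + μ₁ (Ioi u) := measure_union_le _ _
          _ = μ₁ (Ioi u) := by rw [hIoc1, zero_add]
      have hshift2 : μ₂ (Ioi t) = μ₂ (Ioi u) := by
        rw [← Ioc_union_Ioi_eq_Ioi hut]
        refine le_antisymm ?_ (measure_mono subset_union_right)
        calc μ₂ (Ioc t u ∪ Ioi u) ≤ μ₂ (Ioc t u) + μ₂ (Ioi u) := measure_union_le _ _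
          _ = μ₂ (Ioi u) := by rw [hIoc2, zero_add]
      have hseq : ∀ k : ℕ, ∃ v, v ∈ E ∧ v < u + 1/(k+1) := by
        intro k
        have hlt : sInf E < u + 1/((k:ℝ)+1) := by
          rw [← hu]
          have : (0:ℝ) < 1/((k:ℝ)+1) := by positivity
          linarith
        obtain ⟨v, hvE, hv⟩ := (csInf_lt_iff hbdd hEne).mp hlt
        exact ⟨v, hvE, hv⟩
      choose sk hskE hsklt using hseq
      have hsku : ∀ k, u ≤ sk k := fun k => csInf_le hbdd (hskE k)
      have hUnion : Ioi u = ⋃ k, Ioi (sk k) := by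
        ext v
        simp only [mem_Ioi, mem_iUnion]
        constructor
        · intro hv
          obtain ⟨k, hk⟩ := exists_nat_one_div_lt (sub_pos.mpr hv)
          refine ⟨k, ?_⟩
          have := hsklt k
          linarith
        · rintro ⟨k, hk⟩
          exact lt_of_le_of_lt (hsku k) hk
      have hdir : Directed (· ⊆ ·) (fun k => Ioi (sk k)) := by
        intro j k
        rcases le_total (sk j) (sk k) with h | h
        · exact ⟨j, subset_rfl, Ioi_subset_Ioi h⟩
        · exact ⟨k, Ioi_subset_Ioi h, subset_rfl⟩
      have hlim1 : μ₁ (Ioi u) = ⨆ k, μ₁ (Ioi (sk k)) := by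
        rw [hUnion]
        exact hdir.measure_iUnion
      have hlim2 : μ₂ (Ioi u) = ⨆ k, μ₂ (Ioi (sk k)) := by
        rw [hUnion]
        exact hdir.measure_iUnion
      rw [hshift1, hshift2, hlim1, hlim2]
      refine iSup_congr fun k => ?_
      rw [hIoi1, hIoi2]
      exact (hskE k).1
  exact Measure.ext_of_Ici μ₁ μ₂ hpt
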